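/- Let $(\tau_i)_{i\ge1}$ be i.i.d. nonnegative random variables with finite mean $m=\mathbf{E}[\tau_1]$ and tail $\mathbf{P}(\tau_1>t)$ regularly varying at infinity with index $-\theta<-1$. Fix $\delta>0$ and $\gamma>1$ with $\gamma\delta m<1$. Then there exists $C>0$ such that for all $t$ large and all $x\in[0,\delta t]$, $\mathbf{P}\big(\sum_{i=1}^{[x]+1}\tau_i>t\big)\le C\,(x+1)\,\mathbf{P}\big(\tau_1>(1-\gamma\delta m)t\big)$. -/

import Mathlib

open Filter MeasureTheory Set Real ProbabilityTheory
open scoped ENNReal NNReal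





lemma stmt6_exp_quad {x : ℝ} (h0 : 0 ≤ x) (h1 : x ≤ 1) : Real.exp x ≤ 1 + x + 2*x^2 := by
  have h := Real.exp_bound' h0 h1 (n := 2) (by norm_num)
  have hs : (∑ m ∈ Finset.range 2, x ^ m / m.factorial) = 1 + x := by
    simp [Finset.sum_range_succ]
  rw [hs] at h
  norm_num at h
  nlinarith [sq_nonneg x]

lemma stmt6_iter_up {f : ℝ → ℝ} {T K : ℝ} (hT : 1 ≤ T) (hK : 0 ≤ K)
    (h : ∀ t, T ≤ t → f (2*t) ≤ K * f t) :
    ∀ n : ℕ, f (2^n * T) ≤ K^n * f T := by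
  intro n
  induction n with
  | zero => simp
  | succ n ih =>
    have h2n : (1:ℝ) ≤ 2^n := one_le_pow₀ (by norm_num)
    have hge : T ≤ 2^n * T := le_mul_of_one_le_left (by linarith) h2n
    have h' : f (2^(n+1) * T) ≤ K * f (2^n * T) := by
      have := h (2^n * T) hge
      rw [show 2*(2^n*T) = 2^(n+1)*T by ring] at this
      exact this
    calc f (2^(n+1)*T) ≤ K * f (2^n*T) := h'
      _ ≤ K * (K^n * f T) := mul_le_mul_of_nonneg_left ih hK
      _ = K^(n+1) * f T := by ring

lemma stmt6_iter_lo {f : ℝ → ℝ} {T K : ℝ} (hT : 1 ≤ T) (hK : 0 ≤ K)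
    (h : ∀ t, T ≤ t → K * f t ≤ f (2*t)) :
    ∀ n : ℕ, K^n * f T ≤ f (2^n * T) := by
  intro n
  induction n with
  | zero => simp
  | succ n ih =>
    have h2n : (1:ℝ) ≤ 2^n := one_le_pow₀ (by norm_num)
    have hge : T ≤ 2^n * T := le_mul_of_one_le_left (by linarith) h2n
    have h' : K * f (2^n * T) ≤ f (2^(n+1) * T) := by
      have := h (2^n * T) hge
      rw [show 2*(2^n*T) = 2^(n+1)*T by ring] at this
      exact this
    calc K^(n+1) * f T = K * (K^n * f T) := by ring
      _ ≤ K * f (2^n*T) := mul_le_mul_of_nonneg_left ih hK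
      _ ≤ f (2^(n+1)*T) := h'


lemma stmt6_geom_upper {f : ℝ → ℝ} (hpos : ∀ t, 0 < f t) (hanti : Antitone f) {ρ : ℝ} (hρ : 0 < ρ)
    (h2 : ∀ᶠ t in atTop, f (2*t) ≤ 2^(-ρ) * f t) :
    ∃ Cu > 0, ∀ᶠ t in atTop, f t ≤ Cu * t^(-ρ) := by
  obtain ⟨T₀, hT₀⟩ := eventually_atTop.mp h2
  set T := max T₀ 1 with hTdef
  have hT1 : (1:ℝ) ≤ T := le_max_right _ _
  have hTpos : (0:ℝ) < T := by linarith
  have hiter := stmt6_iter_up (f := f) (T := T) (K := 2^(-ρ)) hT1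
    (Real.rpow_nonneg (by norm_num) _)
    (fun t ht => hT₀ t (le_trans (le_max_left _ _) ht))
  refine ⟨f T * (2^ρ * T^ρ), mul_pos (hpos T) (by positivity), ?_⟩
  filter_upwards [eventually_ge_atTop T] with t ht
  have htpos : 0 < t := lt_of_lt_of_le hTpos ht
  have hq : (1:ℝ) ≤ t / T := (one_le_div hTpos).mpr ht
  have hqpos : 0 < t / T := by linarith
  set n := ⌊Real.logb 2 (t/T)⌋₊ with hn
  have hlogb0 : 0 ≤ Real.logb 2 (t/T) := Real.logb_nonneg (by norm_num) hq
  have h2n_le : (2:ℝ)^(n:ℝ) ≤ t / T := by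
    calc (2:ℝ)^(n:ℝ) ≤ (2:ℝ)^(Real.logb 2 (t/T)) :=
          Real.rpow_le_rpow_of_exponent_le (by norm_num) (Nat.floor_le hlogb0)
      _ = t / T := Real.rpow_logb (by norm_num) (by norm_num) hqpos
  have h2n1_gt : t / T < (2:ℝ)^((n:ℝ)+1) := by
    calc t/T = (2:ℝ)^(Real.logb 2 (t/T)) := (Real.rpow_logb (by norm_num) (by norm_num) hqpos).symm
      _ < (2:ℝ)^((n:ℝ)+1) :=
          Real.rpow_lt_rpow_of_exponent_lt (by norm_num) (Nat.lt_floor_add_one _)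
  have h2nT_le : (2:ℝ)^n * T ≤ t := by
    have : (2:ℝ)^(n:ℝ) = (2:ℝ)^n := Real.rpow_natCast 2 n
    rw [← this]
    exact (le_div_iff₀ hTpos).mp h2n_le
  have step1 : f t ≤ (2^(-ρ))^n * f T := le_trans (hanti h2nT_le) (hiter n)
  have step2 : ((2:ℝ)^(-ρ))^n = (2:ℝ)^(-ρ*(n:ℝ)) := by
    rw [← Real.rpow_natCast ((2:ℝ)^(-ρ)) n, ← Real.rpow_mul (by norm_num)]
  have step3 : (2:ℝ)^(-ρ*(n:ℝ)) ≤ 2^ρ * (t/T)^(-ρ) := by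
    have he : (2:ℝ)^(-ρ*(n:ℝ)) = 2^ρ * ((2:ℝ)^((n:ℝ)+1))^(-ρ) := by
      rw [← Real.rpow_mul (by norm_num : (0:ℝ) ≤ 2),
        ← Real.rpow_add (by norm_num : (0:ℝ) < 2)]
      congr 1
      ring
    rw [he]
    have := Real.rpow_le_rpow_of_nonpos hqpos (le_of_lt h2n1_gt) (neg_nonpos.mpr hρ.le)
    exact mul_le_mul_of_nonneg_left this (by positivity)
  have step4 : (t/T)^(-ρ) = T^ρ * t^(-ρ) := by
    rw [Real.div_rpow htpos.le hTpos.le, Real.rpow_neg htpos.le, Real.rpow_neg hTpos.le]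
    field_simp
  calc f t ≤ (2^(-ρ))^n * f T := step1
    _ = (2:ℝ)^(-ρ*(n:ℝ)) * f T := by rw [step2]
    _ ≤ (2^ρ * (t/T)^(-ρ)) * f T := mul_le_mul_of_nonneg_right step3 (hpos T).le
    _ = f T * (2^ρ * T^ρ) * t^(-ρ) := by rw [step4]; ring

lemma stmt6_geom_lower {f : ℝ → ℝ} (hpos : ∀ t, 0 < f t) (hanti : Antitone f) {q : ℝ} (hq : 0 < q)
    (h2 : ∀ᶠ t in atTop, 2^(-q) * f t ≤ f (2*t)) :
    ∃ cl > 0, ∀ᶠ t in atTop, cl * t^(-q) ≤ f t := by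
  obtain ⟨T₀, hT₀⟩ := eventually_atTop.mp h2
  set T := max T₀ 1 with hTdef
  have hT1 : (1:ℝ) ≤ T := le_max_right _ _
  have hTpos : (0:ℝ) < T := by linarith
  have hiter := stmt6_iter_lo (f := f) (T := T) (K := 2^(-q)) hT1
    (Real.rpow_nonneg (by norm_num) _)
    (fun t ht => hT₀ t (le_trans (le_max_left _ _) ht))
  refine ⟨f T * 2^(-q) * T^q, mul_pos (mul_pos (hpos T) (by positivity)) (by positivity), ?_⟩
  filter_upwards [eventually_ge_atTop T] with t ht
  have htpos : 0 < t := lt_of_lt_of_le hTpos ht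
  have hq1 : (1:ℝ) ≤ t / T := (one_le_div hTpos).mpr ht
  have hqpos : 0 < t / T := by linarith
  set n := ⌊Real.logb 2 (t/T)⌋₊ with hn
  have hlogb0 : 0 ≤ Real.logb 2 (t/T) := Real.logb_nonneg (by norm_num) hq1
  have h2n_le : (2:ℝ)^(n:ℝ) ≤ t / T := by
    calc (2:ℝ)^(n:ℝ) ≤ (2:ℝ)^(Real.logb 2 (t/T)) :=
          Real.rpow_le_rpow_of_exponent_le (by norm_num) (Nat.floor_le hlogb0)
      _ = t / T := Real.rpow_logb (by norm_num) (by norm_num) hqpos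
  have h2n1_gt : t / T < (2:ℝ)^((n:ℝ)+1) := by
    calc t/T = (2:ℝ)^(Real.logb 2 (t/T)) := (Real.rpow_logb (by norm_num) (by norm_num) hqpos).symm
      _ < (2:ℝ)^((n:ℝ)+1) :=
          Real.rpow_lt_rpow_of_exponent_lt (by norm_num) (Nat.lt_floor_add_one _)
  have h2n1T_ge : t ≤ (2:ℝ)^(n+1) * T := by
    have hc : (2:ℝ)^((n:ℝ)+1) = (2:ℝ)^(n+1:ℕ) := by
      rw [← Real.rpow_natCast 2 (n+1)]; push_cast; ring_nf
    rw [← hc]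
    exact le_of_lt ((div_lt_iff₀ hTpos).mp h2n1_gt)
  have step1 : (2^(-q))^(n+1) * f T ≤ f t := le_trans (hiter (n+1)) (hanti h2n1T_ge)
  have step2 : ((2:ℝ)^(-q))^(n+1:ℕ) = (2:ℝ)^(-q) * (2:ℝ)^(-q*(n:ℝ)) := by
    rw [← Real.rpow_natCast ((2:ℝ)^(-q)) (n+1), ← Real.rpow_mul (by norm_num),
      ← Real.rpow_add (by norm_num : (0:ℝ) < 2)]
    congr 1
    push_cast
    ring
  have step3 : (t/T)^(-q) ≤ (2:ℝ)^(-q*(n:ℝ)) := by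
    have he : (2:ℝ)^(-q*(n:ℝ)) = ((2:ℝ)^((n:ℝ)))^(-q) := by
      rw [← Real.rpow_mul (by norm_num : (0:ℝ) ≤ 2)]; congr 1; ring
    rw [he]
    exact Real.rpow_le_rpow_of_nonpos (by positivity) h2n_le (neg_nonpos.mpr hq.le)
  have step4 : (t/T)^(-q) = T^q * t^(-q) := by
    rw [Real.div_rpow htpos.le hTpos.le, Real.rpow_neg htpos.le, Real.rpow_neg hTpos.le]
    field_simp
  calc f T * 2^(-q) * T^q * t^(-q) = (2^(-q)) * ((t/T)^(-q)) * f T := by rw [step4]; ring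
    _ ≤ (2^(-q)) * (2:ℝ)^(-q*(n:ℝ)) * f T := by
        have := mul_le_mul_of_nonneg_left step3 (Real.rpow_nonneg (by norm_num : (0:ℝ) ≤ 2) (-q))
        exact mul_le_mul_of_nonneg_right this (hpos T).le
    _ = (2^(-q))^(n+1) * f T := by rw [step2]
    _ ≤ f t := step1


lemma stmt6_minsq (v : ℕ → ℝ) (hv : Monotone v) (hv0 : 0 ≤ v 0) {x : ℝ} (hx : 0 ≤ x) :
    ∀ J : ℕ, min x (v J) ^ 2 ≤ v 0 ^ 2 + ∑ j ∈ Finset.range J,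
      (v (j+1))^2 * (if v j < x then 1 else 0) := by
  intro J
  induction J with
  | zero =>
    simp only [Finset.range_zero, Finset.sum_empty, add_zero]
    have h1 : min x (v 0) ≤ v 0 := min_le_right _ _
    have h2 : 0 ≤ min x (v 0) := le_min hx hv0
    nlinarith
  | succ J ih =>
    rw [Finset.sum_range_succ]
    have hterm : ∀ j, (0:ℝ) ≤ (v (j+1))^2 * (if v j < x then 1 else 0) := by
      intro j; positivity
    by_cases hc : v J < x
    · have h1 : min x (v (J+1)) ≤ v (J+1) := min_le_right _ _
      have h2 : 0 ≤ min x (v (J+1)) := le_min hx (le_trans hv0 (hv (Nat.zero_le _)))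
      have h3 : min x (v (J+1))^2 ≤ (v (J+1))^2 := by nlinarith
      have h4 : (0:ℝ) ≤ v 0 ^2 + ∑ j ∈ Finset.range J, (v (j+1))^2 * (if v j < x then 1 else 0) := by
        have hs : (0:ℝ) ≤ ∑ j ∈ Finset.range J, (v (j+1))^2 * (if v j < x then 1 else 0) :=
          Finset.sum_nonneg (fun j _ => hterm j)
        positivity
      simp only [hc, if_true, mul_one]
      linarith
    · push_neg at hc
      have hmin : min x (v (J+1)) = min x (v J) := by
        rw [min_eq_left hc, min_eq_left (le_trans hc (hv (Nat.le_succ J)))]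
      rw [hmin]
      simp only [hc.not_gt, if_false, mul_zero, add_zero]
      exact ih


lemma stmt6_tail_upper {f : ℝ → ℝ} (hpos : ∀ t, 0 < f t) (hanti : Antitone f)
    {θ r : ℝ} (hr : 0 < r) (hrθ : r < θ)
    (hlim : Tendsto (fun t => f (2*t) / f t) atTop (nhds ((2:ℝ)^(-θ)))) :
    ∃ S₀ ≥ (1:ℝ), ∀ s, S₀ ≤ s → f s ≤ s^(-r) := by
  set ρ := (r + θ)/2 with hρdef
  have hρ : 0 < ρ := by rw [hρdef]; linarith
  have hρr : r < ρ := by rw [hρdef]; linarith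
  have hρθ : ρ < θ := by rw [hρdef]; linarith
  have hlt : (2:ℝ)^(-θ) < 2^(-ρ) :=
    Real.rpow_lt_rpow_of_exponent_lt (by norm_num) (by linarith)
  have hev : ∀ᶠ t in atTop, f (2*t) ≤ 2^(-ρ) * f t := by
    filter_upwards [hlim.eventually_lt_const hlt] with t ht
    exact le_of_lt ((div_lt_iff₀ (hpos t)).mp ht)
  obtain ⟨Cu, hCu, hev2⟩ := stmt6_geom_upper hpos hanti hρ hev
  have hev3 : ∀ᶠ t in atTop, Cu ≤ t^(ρ - r) :=
    (tendsto_rpow_atTop (by linarith)).eventually_ge_atTop Cu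
  have : ∀ᶠ s in atTop, f s ≤ s^(-r) := by
    filter_upwards [hev2, hev3, eventually_gt_atTop 0] with s h1 h2 h3
    calc f s ≤ Cu * s^(-ρ) := h1
      _ ≤ s^(ρ-r) * s^(-ρ) := mul_le_mul_of_nonneg_right h2 (Real.rpow_nonneg h3.le _)
      _ = s^(-r) := by rw [← Real.rpow_add h3]; congr 1; ring
  obtain ⟨S₀, hS₀⟩ := eventually_atTop.mp this
  exact ⟨max S₀ 1, le_max_right _ _, fun s hs => hS₀ s (le_trans (le_max_left _ _) hs)⟩

lemma stmt6_tail_lower {f : ℝ → ℝ} (hpos : ∀ t, 0 < f t) (hanti : Antitone f)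
    {θ : ℝ} (hθ : 0 < θ)
    (hlim : Tendsto (fun t => f (2*t) / f t) atTop (nhds ((2:ℝ)^(-θ)))) :
    ∃ T₂ ≥ (1:ℝ), ∀ t, T₂ ≤ t → t^(-(θ+1)) ≤ f t := by
  set q := θ + 1/2 with hqdef
  have hq : 0 < q := by rw [hqdef]; linarith
  have hlt : (2:ℝ)^(-q) < 2^(-θ) :=
    Real.rpow_lt_rpow_of_exponent_lt (by norm_num) (by rw [hqdef]; linarith)
  have hev : ∀ᶠ t in atTop, 2^(-q) * f t ≤ f (2*t) := by
    filter_upwards [hlim.eventually_const_lt hlt] with t ht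
    exact le_of_lt ((lt_div_iff₀ (hpos t)).mp ht)
  obtain ⟨cl, hcl, hev2⟩ := stmt6_geom_lower hpos hanti hq hev
  have hev3 : ∀ᶠ t in atTop, (fun t : ℝ => t^(-(1/2:ℝ))) t < cl :=
    (tendsto_rpow_neg_atTop (by norm_num)).eventually_lt_const hcl
  have : ∀ᶠ t in atTop, t^(-(θ+1)) ≤ f t := by
    filter_upwards [hev2, hev3, eventually_gt_atTop 0] with t h1 h2 h3
    calc t^(-(θ+1)) = t^(-(1/2:ℝ)) * t^(-q) := by
          rw [← Real.rpow_add h3]; congr 1; rw [hqdef]; ring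
      _ ≤ cl * t^(-q) := mul_le_mul_of_nonneg_right h2.le (Real.rpow_nonneg h3.le _)
      _ ≤ f t := h1
  obtain ⟨T₂, hT₂⟩ := eventually_atTop.mp this
  exact ⟨max T₂ 1, le_max_right _ _, fun t ht => hT₂ t (le_trans (le_max_left _ _) ht)⟩
section Helpers

lemma stmt6_ev_le (A B w₁ w₂ : ℝ) (hB : 0 < B) (hw : w₁ < w₂) :
    ∀ᶠ t in atTop, A * t^w₁ ≤ B * t^w₂ := by
  filter_upwards [(tendsto_rpow_atTop (sub_pos.mpr hw)).eventually_ge_atTop (A/B),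
    eventually_gt_atTop 0] with t h1 h2
  have h3 : A ≤ B * t^(w₂-w₁) := by
    rw [div_le_iff₀ hB] at h1
    linarith
  calc A * t^w₁ ≤ (B * t^(w₂-w₁)) * t^w₁ :=
        mul_le_mul_of_nonneg_right h3 (Real.rpow_nonneg h2.le _)
    _ = B * (t^(w₂-w₁) * t^w₁) := by ring
    _ = B * t^w₂ := by rw [← Real.rpow_add h2]; ring_nf

end Helpers

set_option maxHeartbeats 2000000 in
theorem stmt6
    {Ω : Type*} [MeasurableSpace Ω] (μ : Measure Ω) [IsProbabilityMeasure μ]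
    (τ : ℕ → Ω → ℝ) (m θ δ γ : ℝ)
    (hmeas : ∀ i, Measurable (τ i))
    (hindep : ProbabilityTheory.iIndepFun τ μ)
    (hident : ∀ i, Measure.map (τ i) μ = Measure.map (τ 0) μ)
    (hnonneg : ∀ i, ∀ᵐ ω ∂μ, 0 ≤ τ i ω)
    (hint : Integrable (τ 0) μ) (hm : m = ∫ ω, τ 0 ω ∂μ)
    (htailpos : ∀ t : ℝ, 0 < μ {ω | t < τ 0 ω})
    (hθ : 1 < θ)
    (hRV : ∀ s > (0:ℝ),
      Tendsto (fun t => (μ {ω | s * t < τ 0 ω}).toReal / (μ {ω | t < τ 0 ω}).toReal)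
        atTop (nhds (s ^ (-θ))))
    (hδ : 0 < δ) (hγ : 1 < γ) (hγδm : γ * δ * m < 1) :
    ∃ C > (0:ℝ), ∀ᶠ t in atTop, ∀ x ∈ Icc (0:ℝ) (δ * t),
      μ {ω | t < ∑ i ∈ Finset.range (⌊x⌋₊ + 1), τ i ω} ≤
        ENNReal.ofReal (C * (x + 1)) * μ {ω | (1 - γ * δ * m) * t < τ 0 ω} := by
  classical
  -- tail function
  set f : ℝ → ℝ := fun s => (μ {ω | s < τ 0 ω}).toReal with hfdef
  have hμfin : ∀ s : Set Ω, μ s ≠ ⊤ := fun s => measure_ne_top μ s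
  have hfpos : ∀ s, 0 < f s := fun s => ENNReal.toReal_pos (htailpos s).ne' (hμfin _)
  have hf_nonneg : ∀ s, 0 ≤ f s := fun s => (hfpos s).le
  have hfanti : Antitone f := by
    intro s₁ s₂ h12
    exact ENNReal.toReal_mono (hμfin _) (measure_mono (fun ω hω => lt_of_le_of_lt h12 hω))
  -- basic scalars
  have hm0 : 0 ≤ m := hm ▸ integral_nonneg_of_ae (hnonneg 0)
  set b : ℝ := δ * m with hbdef
  have hb0 : 0 ≤ b := mul_nonneg hδ.le hm0
  have hb1 : b < 1 := by
    have h1 : 1*(δ*m) ≤ γ*(δ*m) := mul_le_mul_of_nonneg_right hγ.le (mul_nonneg hδ.le hm0)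
    rw [hbdef]
    linarith [h1, hγδm]
  set c : ℝ := 1 - γ * δ * m with hcdef
  have hc : 0 < c := by rw [hcdef]; linarith
  -- exponents
  set θ₂ : ℝ := min θ 2 with hθ₂def
  have hθ₂1 : 1 < θ₂ := lt_min hθ (by norm_num)
  have hθ₂2 : θ₂ ≤ 2 := min_le_right _ _
  have hθ₂θ : θ₂ ≤ θ := min_le_left _ _
  set r : ℝ := (1 + θ₂)/2 with hrdef
  have hr1 : 1 < r := by rw [hrdef]; linarith
  have hr2 : r < 2 := by rw [hrdef]; linarith
  have hrθ : r < θ := by rw [hrdef]; linarith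
  set α : ℝ := (1 + 1/r)/2 with hαdef
  have hrinv1 : 1/r < 1 := by
    rw [div_lt_one (by linarith)]; linarith
  have hrinv0 : 0 < 1/r := by positivity
  have hα1 : α < 1 := by rw [hαdef]; linarith
  have hα0 : 0 < α := by rw [hαdef]; linarith
  have hαr : 1 < α * r := by
    rw [hαdef]
    have : (1 + 1/r)/2 * r = (r + 1)/2 := by field_simp
    rw [this]; linarith
  set η : ℝ := α * (r - 1)/8 with hηdef
  have hη : 0 < η := by
    have h1 : 0 < α*(r-1) := mul_pos hα0 (by linarith)
    rw [hηdef]; linarith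
  set J : ℕ := ⌈(6:ℝ)/(r-1)⌉₊ with hJdef
  have hJ : α ≤ α/4 + J * η := by
    have h1 : (6:ℝ)/(r-1) ≤ J := Nat.le_ceil _
    have hrne : r - 1 ≠ 0 := by linarith
    have h2 : (6:ℝ)/(r-1) * η = 3*α/4 := by
      rw [hηdef]; field_simp; ring
    linarith [mul_le_mul_of_nonneg_right h1 hη.le, h2]
  set k : ℕ := ⌈(θ+2)/(α*r-1)⌉₊ + 2 with hkdef
  have hk2 : 2 ≤ k := by omega
  have hk0 : 0 < k := by omega
  have hkε : θ + 2 ≤ k * (α*r - 1) := by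
    have h1 : (θ+2)/(α*r-1) ≤ (⌈(θ+2)/(α*r-1)⌉₊ : ℝ) := Nat.le_ceil _
    have h2 : ((⌈(θ+2)/(α*r-1)⌉₊ : ℝ)) ≤ (k:ℝ) := by
      rw [hkdef]; push_cast; linarith
    have h3 : (θ+2)/(α*r-1) ≤ (k:ℝ) := le_trans h1 h2
    rw [div_le_iff₀ (by linarith)] at h3
    linarith
  set β : ℝ := (1-b)/(2*k) with hβdef
  have hβ : 0 < β := by
    have hk0' : (0:ℝ) < k := by exact_mod_cast hk0
    rw [hβdef]
    exact div_pos (by linarith) (by linarith)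
  set D : ℝ := (β/c)^(-θ) + 1 with hDdef
  have hD0 : 0 < D := by
    have := Real.rpow_nonneg (le_of_lt (div_pos hβ hc)) (-θ)
    rw [hDdef]; linarith
  -- tail asymptotics
  have hRV2 : Tendsto (fun s => f (2*s) / f s) atTop (nhds ((2:ℝ)^(-θ))) := hRV 2 (by norm_num)
  obtain ⟨S₀, hS₀1, hS₀⟩ := stmt6_tail_upper hfpos hfanti (by linarith : (0:ℝ) < r) hrθ hRV2
  obtain ⟨T₂, hT₂1, hT₂⟩ := stmt6_tail_lower hfpos hfanti (by linarith : (0:ℝ) < θ) hRV2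
  -- identically distributed events
  have hset_eq : ∀ (i : ℕ) (s : ℝ), μ {ω | s < τ i ω} = μ {ω | s < τ 0 ω} := by
    intro i s
    have h1 : μ {ω | s < τ i ω} = Measure.map (τ i) μ (Ioi s) := by
      rw [Measure.map_apply (hmeas i) measurableSet_Ioi]; rfl
    have h2 : μ {ω | s < τ 0 ω} = Measure.map (τ 0) μ (Ioi s) := by
      rw [Measure.map_apply (hmeas 0) measurableSet_Ioi]; rfl
    rw [h1, h2, hident i]
  -- eventual facts
  have hG2 : ∀ᶠ t in atTop, f (β*t) ≤ D * f (c*t) := by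
    have h1 := hRV (β/c) (div_pos hβ hc)
    have h2 : Tendsto (fun t : ℝ => c*t) atTop atTop :=
      Tendsto.const_mul_atTop hc tendsto_id
    have h3 : Tendsto (fun t => f (β*t) / f (c*t)) atTop (nhds ((β/c)^(-θ))) := by
      have h4 := h1.comp h2
      refine h4.congr (fun t => ?_)
      have he : β/c*(c*t) = β*t := by field_simp
      simp only [Function.comp_apply]
      rw [he]
    have hlt : (β/c)^(-θ) < D := by rw [hDdef]; linarith
    filter_upwards [h3.eventually_lt_const hlt] with t ht
    exact le_of_lt ((div_lt_iff₀ (hfpos _)).mp ht)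
  have hG3 : ∀ᶠ t in atTop, ((δ+1)*t)^k * (t^(-(α*r)))^k ≤ (c*t)^(-(θ+1)) := by
    have hw : (k:ℝ)*(1-α*r) < -(θ+1) := by
      have hkc : (0:ℝ) < k := by exact_mod_cast hk0
      linarith [hkε]
    have hev := stmt6_ev_le ((δ+1)^k) (c^(-(θ+1))) ((k:ℝ)*(1-α*r)) (-(θ+1))
      (Real.rpow_pos_of_pos hc _) hw
    filter_upwards [hev, eventually_gt_atTop 0] with t h1 h2
    have e1 : ((δ+1)*t)^k = (δ+1)^k * t^((k:ℕ):ℝ) := by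
      rw [mul_pow, Real.rpow_natCast]
    have e2 : (t^(-(α*r)))^k = t^((-(α*r))*((k:ℕ):ℝ)) := by
      rw [← Real.rpow_natCast (t^(-(α*r))) k, ← Real.rpow_mul h2.le]
    calc ((δ+1)*t)^k * (t^(-(α*r)))^k
        = (δ+1)^k * (t^((k:ℕ):ℝ) * t^((-(α*r))*((k:ℕ):ℝ))) := by rw [e1, e2]; ring
      _ = (δ+1)^k * t^((k:ℝ)*(1-α*r)) := by
          rw [← Real.rpow_add h2]; congr 1; ring
      _ ≤ c^(-(θ+1)) * t^(-(θ+1)) := h1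
      _ = (c*t)^(-(θ+1)) := (Real.mul_rpow hc.le h2.le).symm
  have hG4 : ∀ᶠ t in atTop, Real.exp (-((1-b)/4) * t^(1-α)) ≤ (c*t)^(-(θ+1)) := by
    have hw : (0:ℝ) < 1-α := by linarith
    have hK : (0:ℝ) < (1-b)/4 := by linarith
    have hcomp := (tendsto_rpow_mul_exp_neg_mul_atTop_nhds_zero ((θ+1)/(1-α)) ((1-b)/4) hK).comp
        (tendsto_rpow_atTop hw)
    have hev := hcomp.eventually_lt_const (show (0:ℝ) < c^(-(θ+1)) from Real.rpow_pos_of_pos hc _)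
    filter_upwards [hev, eventually_gt_atTop 1] with t h1 h2
    have htpos : (0:ℝ) < t := by linarith
    simp only [Function.comp_apply] at h1
    have e1 : (t^(1-α))^((θ+1)/(1-α)) = t^(θ+1) := by
      rw [← Real.rpow_mul htpos.le]
      congr 1
      field_simp
    rw [e1] at h1
    have h3 : (0:ℝ) < t^(θ+1) := Real.rpow_pos_of_pos htpos _
    have h4 : Real.exp (-((1-b)/4) * t^(1-α)) ≤ c^(-(θ+1)) / t^(θ+1) := by
      rw [le_div_iff₀ h3]
      linarith [h1]
    calc Real.exp (-((1-b)/4) * t^(1-α)) ≤ c^(-(θ+1)) / t^(θ+1) := h4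
      _ = c^(-(θ+1)) * t^(-(θ+1)) := by rw [Real.rpow_neg htpos.le]; ring
      _ = (c*t)^(-(θ+1)) := (Real.mul_rpow hc.le htpos.le).symm
  have hG5a : ∀ᶠ t in atTop, m * t^(-α) ≤ (1-b)/12 * t^(1-α) :=
    stmt6_ev_le m ((1-b)/12) (-α) (1-α) (by linarith) (by linarith)
  have hG5b : ∀ᶠ t in atTop, 2*(δ+1) * t^(1-2*α+α/2) ≤ (1-b)/12 * t^(1-α) :=
    stmt6_ev_le _ _ _ _ (by linarith) (by linarith)
  have hG5c : ∀ᶠ t in atTop, 2*(δ+1)*J * t^(1-2*α+(α*(2-r)+2*η)) ≤ (1-b)/12 * t^(1-α) :=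
    stmt6_ev_le _ _ _ _ (by linarith) (by linarith [hηdef, hη])
  have hG6 : ∀ᶠ t in atTop, S₀ ≤ t^(α/4) :=
    (tendsto_rpow_atTop (by linarith)).eventually_ge_atTop S₀
  have hG8 : ∀ᶠ t in atTop, T₂ ≤ c*t := by
    have : Tendsto (fun t : ℝ => c*t) atTop atTop :=
      Tendsto.const_mul_atTop hc tendsto_id
    exact this.eventually_ge_atTop T₂
  -- conclusion
  refine ⟨D + 2, by linarith, ?_⟩
  filter_upwards [hG2, hG3, hG4, hG5a, hG5b, hG5c, hG6, hG8, eventually_ge_atTop 1]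
    with t hg2 hg3 hg4 hg5a hg5b hg5c hg6 hg8 ht1
  intro x hx
  obtain ⟨hx0, hxδ⟩ := hx
  have htpos : (0:ℝ) < t := by linarith
  set n : ℕ := ⌊x⌋₊ + 1 with hndef
  have hn_le : (n:ℝ) ≤ δ*t + 1 := by
    have := Nat.floor_le hx0
    push_cast [hndef]
    linarith
  have hn_le' : (n:ℝ) ≤ (δ+1)*t := by
    have e : (δ+1)*t = δ*t + t := by ring
    linarith [hn_le, ht1]
  have hn_le_x : (n:ℝ) ≤ x + 1 := by
    have := Nat.floor_le hx0
    push_cast [hndef]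
    linarith
  set u : ℝ := t^α with hudef
  have hu0 : 0 < u := Real.rpow_pos_of_pos htpos _
  set lam : ℝ := t^(-α) with hlamdef
  have hlam0 : 0 < lam := Real.rpow_pos_of_pos htpos _
  have hlamu : lam * u = 1 := by
    rw [hlamdef, hudef, ← Real.rpow_add htpos]
    simp
  set y : ℝ := (1+b)/2 * t with hydef
  -- the three events
  set A : Set Ω := ⋃ i ∈ Finset.range n, {ω | β*t < τ i ω} with hAdef
  set Bev : Set Ω := ⋃ s ∈ Finset.powersetCard k (Finset.range n),
      ⋂ i ∈ s, {ω | u < τ i ω} with hBdef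
  set Cev : Set Ω := {ω | y ≤ ∑ i ∈ Finset.range n, min (τ i ω) u} with hCdef
  set N : Set Ω := {ω | ∀ i, 0 ≤ τ i ω} with hNdef
  have hN0 : μ Nᶜ = 0 := by
    have hae : ∀ᵐ ω ∂μ, ∀ i, 0 ≤ τ i ω := ae_all_iff.mpr hnonneg
    rw [ae_iff] at hae
    convert hae using 2
    rfl
  have hsubset : {ω | t < ∑ i ∈ Finset.range n, τ i ω} ⊆ (A ∪ (Bev ∪ Cev)) ∪ Nᶜ := by
    intro ω hω
    simp only [mem_setOf_eq] at hω
    by_cases hNm : ω ∈ N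
    swap
    · exact Or.inr hNm
    refine Or.inl ?_
    have hN' : ∀ i, 0 ≤ τ i ω := hNm
    by_cases hAm : ω ∈ A
    · exact Or.inl hAm
    refine Or.inr ?_
    have hA' : ∀ i ∈ Finset.range n, τ i ω ≤ β*t := by
      intro i hi
      by_contra hcon
      push_neg at hcon
      refine hAm ?_
      rw [hAdef]
      exact Set.mem_iUnion₂.mpr ⟨i, hi, hcon⟩
    by_cases hBc : k ≤ ((Finset.range n).filter (fun i => u < τ i ω)).card
    · refine Or.inl ?_
      obtain ⟨s, hs_sub, hs_card⟩ :=
        Finset.exists_subset_card_eq (s := (Finset.range n).filter (fun i => u < τ i ω)) hBc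
      rw [hBdef]
      refine Set.mem_iUnion₂.mpr ⟨s, Finset.mem_powersetCard.mpr
        ⟨hs_sub.trans (Finset.filter_subset _ _), hs_card⟩, ?_⟩
      exact Set.mem_iInter₂.mpr (fun i hi => (Finset.mem_filter.mp (hs_sub hi)).2)
    · refine Or.inr ?_
      push_neg at hBc
      have hk0' : (0:ℝ) < k := by exact_mod_cast hk0
      have hcard : ((((Finset.range n).filter (fun i => u < τ i ω)).card : ℝ)) ≤ (k:ℝ) - 1 := by
        have h1 : ((Finset.range n).filter (fun i => u < τ i ω)).card + 1 ≤ k :=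
          Nat.succ_le_of_lt hBc
        have h2 : ((((Finset.range n).filter (fun i => u < τ i ω)).card : ℝ)) + 1 ≤ (k:ℝ) := by
          exact_mod_cast h1
        linarith
      have hsplit := Finset.sum_filter_add_sum_filter_not (Finset.range n)
        (fun i => u < τ i ω) (fun i => τ i ω)
      have h1 : ∑ i ∈ (Finset.range n).filter (fun i => u < τ i ω), τ i ω
          ≤ ((((Finset.range n).filter (fun i => u < τ i ω)).card : ℝ)) * (β*t) := by
        have := Finset.sum_le_card_nsmul ((Finset.range n).filter (fun i => u < τ i ω))
          (fun i => τ i ω) (β*t) (fun i hi => hA' i (Finset.mem_filter.mp hi).1)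
        rwa [nsmul_eq_mul] at this
      have h2 : ∑ i ∈ (Finset.range n).filter (fun i => ¬ u < τ i ω), τ i ω
          = ∑ i ∈ (Finset.range n).filter (fun i => ¬ u < τ i ω), min (τ i ω) u :=
        Finset.sum_congr rfl
          (fun i hi => (min_eq_left (not_lt.mp (Finset.mem_filter.mp hi).2)).symm)
      have h3 : ∑ i ∈ (Finset.range n).filter (fun i => ¬ u < τ i ω), min (τ i ω) u
          ≤ ∑ i ∈ Finset.range n, min (τ i ω) u :=
        Finset.sum_le_sum_of_subset_of_nonneg (Finset.filter_subset _ _)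
          (fun i _ _ => le_min (hN' i) hu0.le)
      have hβt0 : (0:ℝ) ≤ β * t := by positivity
      have hkβ : ((k:ℝ) - 1) * (β*t) ≤ (1-b)/2 * t := by
        have e : ((k:ℝ)-1)*β ≤ (1-b)/2 := by
          rw [hβdef, ← mul_div_assoc, div_le_div_iff₀ (by linarith) (by norm_num)]
          linarith
        linarith [mul_le_mul_of_nonneg_right e htpos.le]
      have hcard' : ((((Finset.range n).filter (fun i => u < τ i ω)).card : ℝ)) * (β*t)
          ≤ ((k:ℝ) - 1) * (β*t) := mul_le_mul_of_nonneg_right hcard hβt0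
      rw [hCdef]
      simp only [mem_setOf_eq]
      rw [hydef]
      linarith
  have key : ∀ (a bb : ℝ≥0∞) (E : ℝ), a ≠ ⊤ → bb ≠ ⊤ → a.toReal ≤ E * bb.toReal →
      a ≤ ENNReal.ofReal E * bb := by
    intro a bb E ha hb hle
    calc a = ENNReal.ofReal a.toReal := (ENNReal.ofReal_toReal ha).symm
      _ ≤ ENNReal.ofReal (E * bb.toReal) := ENNReal.ofReal_le_ofReal hle
      _ = ENNReal.ofReal E * ENNReal.ofReal bb.toReal := ENNReal.ofReal_mul' ENNReal.toReal_nonneg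
      _ = ENNReal.ofReal E * bb := by rw [ENNReal.ofReal_toReal hb]
  have hmuA : μ A ≤ ENNReal.ofReal (x+1) * (ENNReal.ofReal D * μ {ω | c*t < τ 0 ω}) := by
    have hA_le : μ A ≤ (n : ℝ≥0∞) * μ {ω | β*t < τ 0 ω} := by
      rw [hAdef]
      calc μ (⋃ i ∈ Finset.range n, {ω | β*t < τ i ω})
          ≤ ∑ i ∈ Finset.range n, μ {ω | β*t < τ i ω} := measure_biUnion_finset_le _ _
        _ = ∑ _i ∈ Finset.range n, μ {ω | β*t < τ 0 ω} :=
            Finset.sum_congr rfl (fun i _ => hset_eq i _)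
        _ = (n : ℝ≥0∞) * μ {ω | β*t < τ 0 ω} := by
            rw [Finset.sum_const, Finset.card_range, nsmul_eq_mul]
    refine le_trans hA_le ?_
    have h1 : μ {ω | β*t < τ 0 ω} ≤ ENNReal.ofReal D * μ {ω | c*t < τ 0 ω} :=
      key _ _ D (hμfin _) (hμfin _) hg2
    have h2 : (n:ℝ≥0∞) ≤ ENNReal.ofReal (x+1) := by
      rw [← ENNReal.ofReal_natCast n]
      exact ENNReal.ofReal_le_ofReal hn_le_x
    exact mul_le_mul' h2 h1
  have hchoose : (n.choose k : ℝ) ≤ ((δ+1)*t)^k := by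
    have h1 : (n.choose k : ℝ) ≤ (n:ℝ)^k := by exact_mod_cast Nat.choose_le_pow n k
    calc (n.choose k : ℝ) ≤ (n:ℝ)^k := h1
      _ ≤ ((δ+1)*t)^k := pow_le_pow_left₀ (Nat.cast_nonneg n) hn_le' k
  have hmuB : μ Bev ≤ μ {ω | c*t < τ 0 ω} := by
    have hstep : μ Bev ≤ (n.choose k : ℝ≥0∞) * (μ {ω | u < τ 0 ω})^k := by
      rw [hBdef]
      calc μ (⋃ s ∈ Finset.powersetCard k (Finset.range n), ⋂ i ∈ s, {ω | u < τ i ω})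
          ≤ ∑ s ∈ Finset.powersetCard k (Finset.range n), μ (⋂ i ∈ s, {ω | u < τ i ω}) :=
            measure_biUnion_finset_le _ _
        _ = ∑ _s ∈ Finset.powersetCard k (Finset.range n), (μ {ω | u < τ 0 ω})^k := by
            refine Finset.sum_congr rfl (fun s hs => ?_)
            have hcard : s.card = k := (Finset.mem_powersetCard.mp hs).2
            have hs' : ∀ i, i ∈ s → MeasurableSet[MeasurableSpace.comap (τ i) inferInstance]
                {ω | u < τ i ω} := fun i _ => ⟨Ioi u, measurableSet_Ioi, rfl⟩
            have hmi := hindep.meas_biInter hs'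
            rw [hmi, Finset.prod_congr rfl (fun i _ => hset_eq i u), Finset.prod_const, hcard]
        _ = (n.choose k : ℝ≥0∞) * (μ {ω | u < τ 0 ω})^k := by
            rw [Finset.sum_const, Finset.card_powersetCard, Finset.card_range, nsmul_eq_mul]
    refine le_trans hstep ?_
    have hfin : (n.choose k : ℝ≥0∞) * (μ {ω | u < τ 0 ω})^k ≠ ⊤ :=
      ENNReal.mul_ne_top (ENNReal.natCast_ne_top _) (ENNReal.pow_ne_top (hμfin _))
    apply (ENNReal.toReal_le_toReal hfin (hμfin _)).mp
    have e : ((n.choose k : ℝ≥0∞) * (μ {ω | u < τ 0 ω})^k).toReal = (n.choose k : ℝ) * (f u)^k := by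
      rw [ENNReal.toReal_mul, ENNReal.toReal_pow, ENNReal.toReal_natCast]
    rw [e]
    have hfu : f u ≤ t^(-(α*r)) := by
      have hS : S₀ ≤ u := by
        calc S₀ ≤ t^(α/4) := hg6
          _ ≤ t^α := Real.rpow_le_rpow_of_exponent_le ht1 (by linarith)
      calc f u ≤ u^(-r) := hS₀ u hS
        _ = t^(-(α*r)) := by
            rw [hudef, ← Real.rpow_mul htpos.le]
            congr 1
            ring
    calc (n.choose k:ℝ) * (f u)^k ≤ ((δ+1)*t)^k * (t^(-(α*r)))^k := by
          apply mul_le_mul hchoose (pow_le_pow_left₀ (hf_nonneg u) hfu k)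
            (by positivity) (by positivity)
      _ ≤ (c*t)^(-(θ+1)) := hg3
      _ ≤ f (c*t) := hT₂ _ hg8
  have hmuC : μ Cev ≤ μ {ω | c*t < τ 0 ω} := by
    set X : ℕ → Ω → ℝ := fun i ω => min (τ i ω) u with hXdef
    have hXmeas : ∀ i, Measurable (X i) := fun i => (hmeas i).min measurable_const
    have hXindep : iIndepFun X μ :=
      hindep.comp (fun _ z => min z u) (fun _ => measurable_id.min measurable_const)
    set W : Ω → ℝ := ∑ i ∈ Finset.range n, X i with hWdef
    have hWapp : ∀ ω, W ω = ∑ i ∈ Finset.range n, min (τ i ω) u := by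
      intro ω
      rw [hWdef, Finset.sum_apply]
    have hWle : ∀ ω, W ω ≤ n * u := by
      intro ω
      rw [hWapp]
      calc ∑ i ∈ Finset.range n, min (τ i ω) u ≤ ∑ _i ∈ Finset.range n, u :=
            Finset.sum_le_sum (fun i _ => min_le_right _ _)
        _ = n * u := by rw [Finset.sum_const, Finset.card_range, nsmul_eq_mul]
    have hWmeas : Measurable W := by
      have : W = fun ω => ∑ i ∈ Finset.range n, X i ω := funext hWapp
      rw [this]
      exact Finset.measurable_sum _ (fun i _ => hXmeas i)
    have hint_exp : Integrable (fun ω => Real.exp (lam * W ω)) μ := by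
      refine Integrable.mono' (integrable_const (Real.exp (lam * (n * u))))
        ((hWmeas.const_mul lam).exp.aestronglyMeasurable) (ae_of_all _ (fun ω => ?_))
      rw [Real.norm_eq_abs, Real.abs_exp]
      exact Real.exp_le_exp.mpr (mul_le_mul_of_nonneg_left (hWle ω) hlam0.le)
    have hchern := measure_ge_le_exp_mul_mgf (μ := μ) (X := W) y hlam0.le hint_exp
    have hCev : Cev = {ω | y ≤ W ω} := by
      rw [hCdef]
      ext ω
      simp only [mem_setOf_eq, hWapp ω]
    have hmgf_sum : mgf W μ lam = ∏ i ∈ Finset.range n, mgf (X i) μ lam :=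
      hXindep.mgf_sum hXmeas _
    have hcont : Continuous (fun z : ℝ => Real.exp (lam * min z u)) :=
      Real.continuous_exp.comp (continuous_const.mul (continuous_id.min continuous_const))
    have hmgf_id : ∀ i, mgf (X i) μ lam = mgf (X 0) μ lam := by
      intro i
      have e : ∀ j : ℕ, mgf (X j) μ lam
          = ∫ z, Real.exp (lam * min z u) ∂(Measure.map (τ j) μ) := fun j =>
        (integral_map (hmeas j).aemeasurable hcont.aestronglyMeasurable).symm
      rw [e i, e 0, hident i]
    set M : ℝ := mgf (X 0) μ lam with hMdef
    set E₂ : ℝ := ∫ ω, (min (τ 0 ω) u)^2 ∂μ with hE2def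
    have hintmin : Integrable (fun ω => min (τ 0 ω) u) μ := by
      refine Integrable.mono' (hint.abs.add (integrable_const |u|))
        ((hXmeas 0).aestronglyMeasurable) (ae_of_all _ (fun ω => ?_))
      simp only [Pi.add_apply]
      rw [Real.norm_eq_abs]
      rcases le_total (τ 0 ω) u with hle | hle
      · rw [min_eq_left hle]
        linarith [abs_nonneg u, le_abs_self (τ 0 ω), abs_nonneg (τ 0 ω)]
      · rw [min_eq_right hle]
        linarith [abs_nonneg (τ 0 ω), le_abs_self u]
    have hintsq : Integrable (fun ω => (min (τ 0 ω) u)^2) μ := by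
      refine Integrable.mono' (integrable_const (u^2))
        (((hXmeas 0).pow_const 2).aestronglyMeasurable) ?_
      filter_upwards [hnonneg 0] with ω h0
      have ha : 0 ≤ min (τ 0 ω) u := le_min h0 hu0.le
      have hb' : min (τ 0 ω) u ≤ u := min_le_right _ _
      rw [Real.norm_eq_abs, abs_of_nonneg (by positivity)]
      exact pow_le_pow_left₀ ha hb' 2
    have hintexp0 : Integrable (fun ω => Real.exp (lam * min (τ 0 ω) u)) μ := by
      refine Integrable.mono' (integrable_const (Real.exp 1))
        (((hXmeas 0).const_mul lam).exp.aestronglyMeasurable) (ae_of_all _ (fun ω => ?_))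
      rw [Real.norm_eq_abs, Real.abs_exp]
      apply Real.exp_le_exp.mpr
      calc lam * min (τ 0 ω) u ≤ lam * u :=
            mul_le_mul_of_nonneg_left (min_le_right _ _) hlam0.le
        _ = 1 := hlamu
    have hE1 : ∫ ω, min (τ 0 ω) u ∂μ ≤ m := by
      rw [hm]
      exact integral_mono hintmin hint (fun ω => min_le_left _ _)
    have hE2nonneg : 0 ≤ E₂ := by
      rw [hE2def]
      exact integral_nonneg (fun ω => sq_nonneg _)
    have hMrepr : M = ∫ ω, Real.exp (lam * min (τ 0 ω) u) ∂μ := rfl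
    have hM_le : M ≤ Real.exp (lam * m + 2*lam^2*E₂) := by
      have step1 : M ≤ ∫ ω, (1 + lam * min (τ 0 ω) u + 2*lam^2*(min (τ 0 ω) u)^2) ∂μ := by
        rw [hMrepr]
        refine integral_mono_ae hintexp0
          (((integrable_const 1).add (hintmin.const_mul lam)).add (hintsq.const_mul (2*lam^2))) ?_
        filter_upwards [hnonneg 0] with ω h0
        have hz0 : 0 ≤ lam * min (τ 0 ω) u := mul_nonneg hlam0.le (le_min h0 hu0.le)
        have hz1 : lam * min (τ 0 ω) u ≤ 1 := by
          calc lam * min (τ 0 ω) u ≤ lam * u :=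
                mul_le_mul_of_nonneg_left (min_le_right _ _) hlam0.le
            _ = 1 := hlamu
        calc Real.exp (lam * min (τ 0 ω) u)
            ≤ 1 + lam * min (τ 0 ω) u + 2*(lam * min (τ 0 ω) u)^2 := stmt6_exp_quad hz0 hz1
          _ = 1 + lam * min (τ 0 ω) u + 2*lam^2*(min (τ 0 ω) u)^2 := by ring
      have step2 : ∫ ω, (1 + lam * min (τ 0 ω) u + 2*lam^2*(min (τ 0 ω) u)^2) ∂μ
          = 1 + lam * (∫ ω, min (τ 0 ω) u ∂μ) + 2*lam^2*E₂ := by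
        have i1 : Integrable (fun ω => 1 + lam * min (τ 0 ω) u) μ :=
          (integrable_const 1).add (hintmin.const_mul lam)
        have i2 := hintsq.const_mul (2*lam^2)
        have e1 : ∫ ω, (1 + lam * min (τ 0 ω) u + 2*lam^2*(min (τ 0 ω) u)^2) ∂μ
            = (∫ ω, (1 + lam * min (τ 0 ω) u) ∂μ) + ∫ ω, 2*lam^2*(min (τ 0 ω) u)^2 ∂μ :=
          integral_add i1 i2
        have e2 : ∫ ω, (1 + lam * min (τ 0 ω) u) ∂μ
            = (∫ ω, (1:ℝ) ∂μ) + ∫ ω, lam * min (τ 0 ω) u ∂μ :=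
          integral_add (integrable_const 1) (hintmin.const_mul lam)
        rw [e1, e2, integral_const, integral_const_mul, integral_const_mul]
        simp [measure_univ, hE2def]
      have step3 : lam * (∫ ω, min (τ 0 ω) u ∂μ) ≤ lam * m :=
        mul_le_mul_of_nonneg_left hE1 hlam0.le
      have step4 := Real.add_one_le_exp (lam*m + 2*lam^2*E₂)
      calc M ≤ ∫ ω, (1 + lam * min (τ 0 ω) u + 2*lam^2*(min (τ 0 ω) u)^2) ∂μ := step1
        _ = 1 + lam * (∫ ω, min (τ 0 ω) u ∂μ) + 2*lam^2*E₂ := step2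
        _ ≤ 1 + lam*m + 2*lam^2*E₂ := by linarith
        _ ≤ Real.exp (lam*m + 2*lam^2*E₂) := by linarith
    have hE2_le : E₂ ≤ t^(α/2) + J * t^(α*(2-r)+2*η) := by
      set v : ℕ → ℝ := fun j => t^(min (α/4 + j*η) α) with hvdef
      have hvmono : Monotone v := by
        intro i j hij
        apply Real.rpow_le_rpow_of_exponent_le ht1
        have hcast : (i:ℝ) ≤ (j:ℝ) := Nat.cast_le.mpr hij
        have h1 : (i:ℝ)*η ≤ (j:ℝ)*η := mul_le_mul_of_nonneg_right hcast hη.le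
        exact min_le_min (by linarith) le_rfl
      have hv0 : 0 ≤ v 0 := (Real.rpow_pos_of_pos htpos _).le
      have hvpos : ∀ j, 0 < v j := fun j => Real.rpow_pos_of_pos htpos _
      have hvJ : v J = u := by
        have h1 : min (α/4 + (J:ℝ)*η) α = α := min_eq_right hJ
        simp only [hvdef, hudef, h1]
      have haj_le : ∀ j : ℕ, min (α/4 + (j:ℝ)*η) α ≤ α := fun j => min_le_right _ _
      have haj_ge : ∀ j : ℕ, α/4 ≤ min (α/4 + (j:ℝ)*η) α := by
        intro j
        have h1 : (0:ℝ) ≤ (j:ℝ)*η := by positivity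
        exact le_min (by linarith) (by linarith)
      have hstep : ∀ j : ℕ, min (α/4 + ((j+1:ℕ):ℝ)*η) α ≤ min (α/4 + (j:ℝ)*η) α + η := by
        intro j
        have h1 : α/4 + ((j+1:ℕ):ℝ)*η = (α/4 + (j:ℝ)*η) + η := by push_cast; ring
        rw [h1]
        calc min ((α/4 + (j:ℝ)*η) + η) α
            ≤ min ((α/4 + (j:ℝ)*η) + η) (α + η) := min_le_min le_rfl (by linarith)
          _ = min (α/4 + (j:ℝ)*η) α + η := by rw [min_add_add_right]
      have hptwise : ∀ᵐ ω ∂μ, (min (τ 0 ω) u)^2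
          ≤ v 0^2 + ∑ j ∈ Finset.range J, (v (j+1))^2 * (if v j < τ 0 ω then 1 else 0) := by
        filter_upwards [hnonneg 0] with ω h0
        have h1 := stmt6_minsq v hvmono hv0 h0 J
        rwa [hvJ] at h1
      have hind_eq : ∀ j : ℕ, (fun ω => (v (j+1))^2 * (if v j < τ 0 ω then 1 else 0))
          = fun ω => Set.indicator {ω' | v j < τ 0 ω'} (fun _ => (v (j+1))^2) ω := by
        intro j
        funext ω
        rw [Set.indicator_apply]
        by_cases hcc : v j < τ 0 ω
        · simp [hcc]
        · simp [hcc]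
      have hmeas_set : ∀ j : ℕ, MeasurableSet {ω' | v j < τ 0 ω'} := fun j =>
        measurableSet_lt measurable_const (hmeas 0)
      have hint_term : ∀ j : ℕ,
          Integrable (fun ω => (v (j+1))^2 * (if v j < τ 0 ω then 1 else 0)) μ := by
        intro j
        rw [hind_eq j]
        exact (integrable_const _).indicator (hmeas_set j)
      have hterm_val : ∀ j : ℕ, ∫ ω, (v (j+1))^2 * (if v j < τ 0 ω then 1 else 0) ∂μ
          = (v (j+1))^2 * f (v j) := by
        intro j
        rw [hind_eq j, integral_indicator_const _ (hmeas_set j), smul_eq_mul]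
        exact mul_comm _ _
      have hE2_int : E₂ ≤ v 0^2 + ∑ j ∈ Finset.range J, (v (j+1))^2 * f (v j) := by
        rw [hE2def]
        calc ∫ ω, (min (τ 0 ω) u)^2 ∂μ
            ≤ ∫ ω, (v 0^2 + ∑ j ∈ Finset.range J,
                (v (j+1))^2 * (if v j < τ 0 ω then 1 else 0)) ∂μ :=
              integral_mono_ae hintsq
                ((integrable_const _).add (integrable_finset_sum _ (fun j _ => hint_term j)))
                hptwise
          _ = v 0^2 + ∑ j ∈ Finset.range J, (v (j+1))^2 * f (v j) := by
              rw [integral_add (integrable_const _)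
                  (integrable_finset_sum _ (fun j _ => hint_term j)),
                integral_const, integral_finset_sum _ (fun j _ => hint_term j)]
              simp only [measure_univ, ENNReal.toReal_one, smul_eq_mul, one_mul, probReal_univ]
              congr 1
              exact Finset.sum_congr rfl (fun j _ => hterm_val j)
      have hv0sq : v 0^2 = t^(α/2) := by
        have h1 : v 0 = t^(α/4) := by
          have h2 : min (α/4 + ((0:ℕ):ℝ)*η) α = α/4 := by
            rw [Nat.cast_zero, zero_mul, add_zero]
            exact min_eq_left (by linarith)
          simp only [hvdef, h2]
        rw [h1, sq, ← Real.rpow_add htpos]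
        congr 1
        ring
      have hterm_le : ∀ j ∈ Finset.range J, (v (j+1))^2 * f (v j) ≤ t^(α*(2-r)+2*η) := by
        intro j _
        have hfv : f (v j) ≤ t^((min (α/4 + (j:ℝ)*η) α) * (-r)) := by
          have hS : S₀ ≤ v j := by
            calc S₀ ≤ t^(α/4) := hg6
              _ ≤ v j := Real.rpow_le_rpow_of_exponent_le ht1 (haj_ge j)
          calc f (v j) ≤ (v j)^(-r) := hS₀ _ hS
            _ = t^((min (α/4 + (j:ℝ)*η) α) * (-r)) := by
                rw [hvdef, ← Real.rpow_mul htpos.le]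
        have hvsq : (v (j+1))^2 = t^(2 * min (α/4 + ((j+1:ℕ):ℝ)*η) α) := by
          rw [hvdef, sq, ← Real.rpow_add htpos]
          congr 1
          ring
        calc (v (j+1))^2 * f (v j)
            ≤ (v (j+1))^2 * t^((min (α/4 + (j:ℝ)*η) α) * (-r)) :=
              mul_le_mul_of_nonneg_left hfv (by positivity)
          _ = t^(2 * min (α/4 + ((j+1:ℕ):ℝ)*η) α + (min (α/4 + (j:ℝ)*η) α) * (-r)) := by
              rw [hvsq, ← Real.rpow_add htpos]
          _ ≤ t^(α*(2-r)+2*η) := by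
              apply Real.rpow_le_rpow_of_exponent_le ht1
              have h1 := hstep j
              have h2 := haj_le j
              have h3 := haj_ge j
              have h4 : min (α/4 + (j:ℝ)*η) α * (2-r) ≤ α * (2-r) :=
                mul_le_mul_of_nonneg_right h2 (by linarith)
              linarith [h1, h4]
      calc E₂ ≤ v 0^2 + ∑ j ∈ Finset.range J, (v (j+1))^2 * f (v j) := hE2_int
        _ ≤ t^(α/2) + J * t^(α*(2-r)+2*η) := by
            rw [hv0sq]
            have h1 := Finset.sum_le_card_nsmul (Finset.range J) _ _ hterm_le
            rw [Finset.card_range, nsmul_eq_mul] at h1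
            linarith
    have hexp_le : Real.exp (-lam*y) * M^n ≤ Real.exp (-((1-b)/4) * t^(1-α)) := by
      have hMn : M^n ≤ Real.exp (lam*m + 2*lam^2*E₂)^n := pow_le_pow_left₀ mgf_nonneg hM_le n
      have hmerge : ∀ e : ℝ, t*(lam^2*t^e) = t^(1-2*α+e) := by
        intro e
        rw [hlamdef, ← Real.rpow_natCast (t^(-α)) 2, ← Real.rpow_mul htpos.le,
          ← Real.rpow_add htpos]
        nth_rewrite 1 [← Real.rpow_one t]
        rw [← Real.rpow_add htpos]
        congr 1
        push_cast
        ring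
      have eP : lam * t = t^(1-α) := by
        rw [hlamdef]
        nth_rewrite 2 [← Real.rpow_one t]
        rw [← Real.rpow_add htpos]
        congr 1
        ring
      have ehy : lam * y = (1+b)/2 * t^(1-α) := by
        rw [hydef]
        calc lam * ((1+b)/2 * t) = (1+b)/2 * (lam*t) := by ring
          _ = (1+b)/2 * t^(1-α) := by rw [eP]
      have e2 : (n:ℝ)*(lam*m) ≤ b*t^(1-α) + m*t^(-α) := by
        calc (n:ℝ)*(lam*m) ≤ (δ*t+1)*(lam*m) :=
              mul_le_mul_of_nonneg_right hn_le (by positivity)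
          _ = δ*m*(lam*t) + m*lam := by ring
          _ = b*t^(1-α) + m*t^(-α) := by rw [eP, hlamdef, ← hbdef]
      have e3 : (n:ℝ)*(2*lam^2*E₂)
          ≤ 2*(δ+1) * t^(1-2*α+α/2) + 2*(δ+1)*J * t^(1-2*α+(α*(2-r)+2*η)) := by
        have h0 : (0:ℝ) ≤ 2*lam^2*E₂ := mul_nonneg (by positivity) hE2nonneg
        have h1 : (n:ℝ)*(2*lam^2*E₂)
            ≤ ((δ+1)*t)*(2*lam^2*(t^(α/2) + J*t^(α*(2-r)+2*η))) := by
          apply mul_le_mul hn_le' (mul_le_mul_of_nonneg_left hE2_le (by positivity)) h0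
            (by positivity)
        calc (n:ℝ)*(2*lam^2*E₂)
            ≤ ((δ+1)*t)*(2*lam^2*(t^(α/2) + J*t^(α*(2-r)+2*η))) := h1
          _ = 2*(δ+1)*(t*(lam^2*t^(α/2))) + 2*(δ+1)*J*(t*(lam^2*t^(α*(2-r)+2*η))) := by ring
          _ = 2*(δ+1) * t^(1-2*α+α/2) + 2*(δ+1)*J * t^(1-2*α+(α*(2-r)+2*η)) := by
              rw [hmerge (α/2), hmerge (α*(2-r)+2*η)]
      have expand : (n:ℝ)*(lam*m + 2*lam^2*E₂) = (n:ℝ)*(lam*m) + (n:ℝ)*(2*lam^2*E₂) := by ring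
      have hsum : -(lam*y) + n*(lam*m + 2*lam^2*E₂) ≤ -((1-b)/4) * t^(1-α) := by
        linarith [hg5a, hg5b, hg5c, e2, e3, ehy, expand]
      calc Real.exp (-lam*y) * M^n
          ≤ Real.exp (-lam*y) * Real.exp (lam*m + 2*lam^2*E₂)^n :=
            mul_le_mul_of_nonneg_left hMn (Real.exp_pos _).le
        _ = Real.exp (-lam*y + n*(lam*m + 2*lam^2*E₂)) := by
            rw [← Real.exp_nat_mul, ← Real.exp_add]
        _ ≤ Real.exp (-((1-b)/4) * t^(1-α)) := by
            apply Real.exp_le_exp.mpr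
            have h5 : -lam*y = -(lam*y) := by ring
            rw [h5]
            exact hsum
    have hC_toReal : (μ Cev).toReal ≤ f (c*t) := by
      rw [hCev]
      calc (μ {ω | y ≤ W ω}).toReal ≤ Real.exp (-lam*y) * mgf W μ lam := hchern
        _ = Real.exp (-lam*y) * M^n := by
            rw [hmgf_sum, Finset.prod_congr rfl (fun i _ => hmgf_id i), Finset.prod_const,
              Finset.card_range]
        _ ≤ Real.exp (-((1-b)/4) * t^(1-α)) := hexp_le
        _ ≤ (c*t)^(-(θ+1)) := hg4
        _ ≤ f (c*t) := hT₂ _ hg8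
    exact (ENNReal.toReal_le_toReal (hμfin _) (hμfin _)).mp hC_toReal
  -- combine
  have hone : (1:ℝ≥0∞) ≤ ENNReal.ofReal (x+1) := by
    rw [ENNReal.one_le_ofReal]; linarith
  calc μ {ω | t < ∑ i ∈ Finset.range n, τ i ω}
      ≤ μ ((A ∪ (Bev ∪ Cev)) ∪ Nᶜ) := measure_mono hsubset
    _ ≤ μ (A ∪ (Bev ∪ Cev)) + μ Nᶜ := measure_union_le _ _
    _ = μ (A ∪ (Bev ∪ Cev)) := by rw [hN0, add_zero]
    _ ≤ μ A + μ (Bev ∪ Cev) := measure_union_le _ _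
    _ ≤ μ A + (μ Bev + μ Cev) := by
        exact add_le_add_right (measure_union_le _ _) _
    _ ≤ ENNReal.ofReal (x+1) * (ENNReal.ofReal D * μ {ω | c*t < τ 0 ω})
        + (μ {ω | c*t < τ 0 ω} + μ {ω | c*t < τ 0 ω}) := by
        exact add_le_add hmuA (add_le_add hmuB hmuC)
    _ ≤ ENNReal.ofReal (x+1) * (ENNReal.ofReal D * μ {ω | c*t < τ 0 ω})
        + (ENNReal.ofReal (x+1) * μ {ω | c*t < τ 0 ω}
           + ENNReal.ofReal (x+1) * μ {ω | c*t < τ 0 ω}) := by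
        gcongr <;> exact le_mul_of_one_le_left zero_le hone
    _ = ENNReal.ofReal (x+1) * (ENNReal.ofReal D + 1 + 1) * μ {ω | c*t < τ 0 ω} := by ring
    _ = ENNReal.ofReal ((D+2)*(x+1)) * μ {ω | c*t < τ 0 ω} := by
        rw [ENNReal.ofReal_mul (by linarith), ENNReal.ofReal_add hD0.le (by norm_num)]
        norm_num
        ring
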